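/- Let D : ℝ^m → ℝ^l be a linear map, k a positive integer, and A, B : ℝ^m → ℝ^m linear maps such that rank(D ∘ A^k) < rank(D ∘ B^k). Then the set Λ = {λ ∈ ℝ | rank(D ∘ (A + λB)^k) > rank(D ∘ A^k)} is an open and dense subset of ℝ. -/

import Mathlib

open Module LinearMap

open Polynomial Matrix

namespace RankPerturbAux

variable {p' n' d : ℕ}

/-- det ≠ 0 from full rank. -/
lemma det_ne_zero_of_rank_eq {s : ℕ} {W : Matrix (Fin s) (Fin s) ℝ}
    (h : W.rank = s) : W.det ≠ 0 := by
  intro hdet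
  obtain ⟨v, hv, hMv⟩ := (Matrix.exists_mulVec_eq_zero_iff).mpr hdet
  have hker : v ∈ LinearMap.ker W.mulVecLin := by simpa [Matrix.mulVecLin_apply] using hMv
  have hkerne : LinearMap.ker W.mulVecLin ≠ ⊥ := by
    intro hbot
    rw [hbot] at hker
    exact hv (by simpa using hker)
  have h1 : 1 ≤ finrank ℝ (LinearMap.ker W.mulVecLin) := by
    rcases Nat.eq_zero_or_pos (finrank ℝ (LinearMap.ker W.mulVecLin)) with h0 | h0
    · exact absurd (Submodule.finrank_eq_zero.mp h0) hkerne
    · exact h0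
  have hsum := LinearMap.finrank_range_add_finrank_ker W.mulVecLin
  rw [show finrank ℝ (Fin s → ℝ) = s by simp, ← Matrix.rank, h] at hsum
  omega

lemma rank_eq_of_det_ne_zero {s : ℕ} {W : Matrix (Fin s) (Fin s) ℝ}
    (h : W.det ≠ 0) : W.rank = s := by
  have := Matrix.rank_of_isUnit W ((Matrix.isUnit_iff_isUnit_det W).mpr h.isUnit)
  simpa using this

/-- Characterization of rank via Gram determinants of compressed matrices. -/
lemma le_rank_iff (d : ℕ) (M : Matrix (Fin p') (Fin n') ℝ) :
    d ≤ M.rank ↔ ∃ C : Matrix (Fin n') (Fin d) ℝ, ((M * C)ᵀ * (M * C)).det ≠ 0 := by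
  constructor
  · intro hd
    rw [Matrix.rank] at hd
    obtain ⟨f, hf⟩ := exists_linearIndependent_of_le_finrank (R := ℝ)
      (M := ↥(LinearMap.range M.mulVecLin)) hd
    have hv : LinearIndependent ℝ fun j => ((f j : Fin p' → ℝ)) :=
      hf.map' (Submodule.subtype _) (Submodule.ker_subtype _)
    have hmem : ∀ j, ∃ c, M.mulVecLin c = (f j : Fin p' → ℝ) := fun j => (f j).2
    choose c hc using hmem
    refine ⟨Matrix.of fun i j => c j i, ?_⟩
    have hcol : (M * Matrix.of fun i j => c j i)ᵀ = fun j => ((f j : Fin p' → ℝ)) := by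
      funext j i
      simp only [Matrix.transpose_apply, Matrix.mul_apply, Matrix.of_apply]
      rw [← hc j]
      simp [Matrix.mulVecLin_apply, Matrix.mulVec, dotProduct]
    have hrankW : (M * Matrix.of fun i j => c j i).rank = d := by
      rw [Matrix.rank_eq_finrank_span_cols, Matrix.col_def, hcol, finrank_span_eq_card hv]
      simp
    have : ((M * Matrix.of fun i j => c j i)ᵀ * (M * Matrix.of fun i j => c j i)).rank = d := by
      rw [Matrix.rank_transpose_mul_self, hrankW]
    exact det_ne_zero_of_rank_eq this
  · rintro ⟨C, hC⟩
    have h1 : ((M * C)ᵀ * (M * C)).rank = d := rank_eq_of_det_ne_zero hC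
    have h2 : (M * C).rank = d := by rw [← Matrix.rank_transpose_mul_self, h1]
    calc d = (M * C).rank := h2.symm
    _ ≤ M.rank := Matrix.rank_mul_le_left M C





variable {p' n' d : ℕ}

/-- The Gram determinant polynomial of the family `t ↦ DM * (AM + t • BM)^k * C0`. -/
noncomputable def gramPoly (k : ℕ) (DM : Matrix (Fin p') (Fin n') ℝ)
    (AM BM : Matrix (Fin n') (Fin n') ℝ) (C0 : Matrix (Fin n') (Fin d) ℝ) : ℝ[X] :=
  let N := DM.map Polynomial.C *
    (AM.map Polynomial.C + (X : ℝ[X]) • BM.map Polynomial.C) ^ k * C0.map Polynomial.C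
  (Nᵀ * N).det

lemma map_evalC {a b : ℕ} (M : Matrix (Fin a) (Fin b) ℝ) (t : ℝ) :
    (M.map Polynomial.C).map (eval t) = M := by
  ext i j; simp [Matrix.map_apply]

lemma map_eval_base (AM BM : Matrix (Fin n') (Fin n') ℝ) (t : ℝ) :
    ((AM.map Polynomial.C + (X : ℝ[X]) • BM.map Polynomial.C)).map (eval t) = AM + t • BM := by
  ext i j
  simp only [Matrix.map_apply, Matrix.add_apply, Matrix.smul_apply, smul_eq_mul, eval_add,
    eval_mul, eval_C, eval_X, eval_smul, Pi.smul_apply]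

lemma map_eval_pow (k : ℕ) (P : Matrix (Fin n') (Fin n') ℝ[X]) (t : ℝ) :
    (P ^ k).map (eval t) = (P.map (eval t)) ^ k := by
  have := map_pow ((Polynomial.evalRingHom t).mapMatrix (m := Fin n')) P k
  simpa [RingHom.mapMatrix_apply, Polynomial.coe_evalRingHom] using this

lemma gramPoly_eval (k : ℕ) (DM : Matrix (Fin p') (Fin n') ℝ)
    (AM BM : Matrix (Fin n') (Fin n') ℝ) (C0 : Matrix (Fin n') (Fin d) ℝ) (t : ℝ) :
    (gramPoly k DM AM BM C0).eval t =
      ((DM * (AM + t • BM) ^ k * C0)ᵀ * (DM * (AM + t • BM) ^ k * C0)).det := by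
  have hN : (DM.map Polynomial.C *
      (AM.map Polynomial.C + (X : ℝ[X]) • BM.map Polynomial.C) ^ k *
      C0.map Polynomial.C).map ⇑(Polynomial.evalRingHom t) = DM * (AM + t • BM) ^ k * C0 := by
    rw [Matrix.map_mul, Matrix.map_mul]
    have h1 : ∀ {a b : ℕ} (M : Matrix (Fin a) (Fin b) ℝ[X]),
        M.map ⇑(Polynomial.evalRingHom t) = M.map (eval t) := by
      intro a b M; rfl
    rw [h1, h1, h1, map_eval_pow, map_eval_base, map_evalC, map_evalC]
  have := (Polynomial.evalRingHom t).map_det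
    ((DM.map Polynomial.C *
      (AM.map Polynomial.C + (X : ℝ[X]) • BM.map Polynomial.C) ^ k *
      C0.map Polynomial.C)ᵀ *
     (DM.map Polynomial.C *
      (AM.map Polynomial.C + (X : ℝ[X]) • BM.map Polynomial.C) ^ k *
      C0.map Polynomial.C))
  rw [gramPoly]
  simp only [RingHom.mapMatrix_apply] at this
  rw [show ∀ q : ℝ[X], eval t q = (Polynomial.evalRingHom t) q from fun q => rfl,
    this, Matrix.map_mul, Matrix.transpose_map, hN]

/-- `toMatrix'` of a power of an endomorphism. -/
lemma toMatrix'_pow (L : Module.End ℝ (Fin n' → ℝ)) (k : ℕ) :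
    LinearMap.toMatrix' ((L ^ k : Module.End ℝ (Fin n' → ℝ)) : (Fin n' → ℝ) →ₗ[ℝ] (Fin n' → ℝ))
      = (LinearMap.toMatrix' (L : (Fin n' → ℝ) →ₗ[ℝ] (Fin n' → ℝ))) ^ k := by
  induction k with
  | zero => simpa using LinearMap.toMatrix'_id (R := ℝ) (n := Fin n')
  | succ m ih =>
    rw [pow_succ, pow_succ, ← ih, ← LinearMap.toMatrix'_mul]

lemma finrank_range_eq_rank (f : (Fin n' → ℝ) →ₗ[ℝ] (Fin p' → ℝ)) :
    finrank ℝ (LinearMap.range f) = (LinearMap.toMatrix' f).rank := by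
  rw [Matrix.rank, ← Matrix.toLin'_apply', Matrix.toLin'_toMatrix']



lemma isOpen_eval_ne (P : ℝ[X]) : IsOpen {t : ℝ | eval t P ≠ 0} := by
  have : {t : ℝ | eval t P ≠ 0} = (fun t : ℝ => eval t P) ⁻¹' ({0}ᶜ) := by
    ext t; simp
  rw [this]
  exact (isOpen_compl_singleton).preimage (Polynomial.continuous P)

end RankPerturbAux

open RankPerturbAux

/-- Let `D : ℝ^n → ℝ^p` be a linear map, `k` a positive integer, and
`A, B : ℝ^n → ℝ^n` linear maps with `rank (D ∘ A^k) < rank (D ∘ B^k)`.  Then the set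
`Λ = {λ : ℝ | rank (D ∘ (A + λB)^k) > rank (D ∘ A^k)}` is open and dense in `ℝ`. -/
theorem rank_perturbation_open_dense (n p k : ℕ) (hk : 0 < k)
    (D : (Fin n → ℝ) →ₗ[ℝ] (Fin p → ℝ)) (A B : Module.End ℝ (Fin n → ℝ))
    (h : finrank ℝ (LinearMap.range (D ∘ₗ (A ^ k : Module.End ℝ (Fin n → ℝ)))) <
      finrank ℝ (LinearMap.range (D ∘ₗ (B ^ k : Module.End ℝ (Fin n → ℝ))))) :
    IsOpen {t : ℝ |
        finrank ℝ (LinearMap.range (D ∘ₗ (((A + t • B) ^ k : Module.End ℝ (Fin n → ℝ))))) >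
        finrank ℝ (LinearMap.range (D ∘ₗ (A ^ k : Module.End ℝ (Fin n → ℝ))))} ∧
    Dense {t : ℝ |
        finrank ℝ (LinearMap.range (D ∘ₗ (((A + t • B) ^ k : Module.End ℝ (Fin n → ℝ))))) >
        finrank ℝ (LinearMap.range (D ∘ₗ (A ^ k : Module.End ℝ (Fin n → ℝ))))} := by
  classical
  set DM : Matrix (Fin p) (Fin n) ℝ := LinearMap.toMatrix' D with hDM
  set AM : Matrix (Fin n) (Fin n) ℝ :=
    LinearMap.toMatrix' (A : (Fin n → ℝ) →ₗ[ℝ] (Fin n → ℝ)) with hAM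
  set BM : Matrix (Fin n) (Fin n) ℝ :=
    LinearMap.toMatrix' (B : (Fin n → ℝ) →ₗ[ℝ] (Fin n → ℝ)) with hBM
  have hcomp : ∀ L : Module.End ℝ (Fin n → ℝ),
      finrank ℝ (LinearMap.range (D ∘ₗ (L ^ k : Module.End ℝ (Fin n → ℝ)))) =
        (DM * (LinearMap.toMatrix' (L : (Fin n → ℝ) →ₗ[ℝ] (Fin n → ℝ))) ^ k).rank := by
    intro L
    rw [finrank_range_eq_rank, LinearMap.toMatrix'_comp, toMatrix'_pow]
  have hAt : ∀ t : ℝ,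
      LinearMap.toMatrix' ((A + t • B : Module.End ℝ (Fin n → ℝ)) :
        (Fin n → ℝ) →ₗ[ℝ] (Fin n → ℝ)) = AM + t • BM := by
    intro t
    rw [hAM, hBM]
    exact (LinearMap.toMatrix'.map_add _ _).trans (by rw [LinearMap.toMatrix'.map_smul])
  set r : ℕ := (DM * AM ^ k).rank with hr
  have hchar : ∀ t : ℝ,
      (r < (DM * (AM + t • BM) ^ k).rank ↔
        ∃ C : Matrix (Fin n) (Fin (r + 1)) ℝ, eval t (gramPoly k DM AM BM C) ≠ 0) := by
    intro t
    rw [Nat.lt_iff_add_one_le, le_rank_iff]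
    constructor
    · rintro ⟨C, hC⟩
      exact ⟨C, by rw [gramPoly_eval]; simpa [Matrix.mul_assoc] using hC⟩
    · rintro ⟨C, hC⟩
      rw [gramPoly_eval] at hC
      exact ⟨C, by simpa [Matrix.mul_assoc] using hC⟩
  have hset : {t : ℝ |
        finrank ℝ (LinearMap.range (D ∘ₗ (((A + t • B) ^ k : Module.End ℝ (Fin n → ℝ))))) >
        finrank ℝ (LinearMap.range (D ∘ₗ (A ^ k : Module.End ℝ (Fin n → ℝ))))} =
      {t : ℝ | r < (DM * (AM + t • BM) ^ k).rank} := by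
    ext t
    simp only [Set.mem_setOf_eq, gt_iff_lt, hcomp, hAt t, hr, hAM]
  rw [hset]
  constructor
  · have : {t : ℝ | r < (DM * (AM + t • BM) ^ k).rank} =
        ⋃ C : Matrix (Fin n) (Fin (r + 1)) ℝ, {t : ℝ | eval t (gramPoly k DM AM BM C) ≠ 0} := by
      ext t
      simp only [Set.mem_setOf_eq, Set.mem_iUnion, hchar t]
    rw [this]
    exact isOpen_iUnion fun C => isOpen_eval_ne _
  · -- density
    have h' : r + 1 ≤ (DM * BM ^ k).rank := by
      have := h
      rw [hcomp A, hcomp B, ← hAM, ← hBM, ← hr, Nat.lt_iff_add_one_le] at this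
      exact this
    obtain ⟨C1, hC1⟩ := (le_rank_iff (r + 1) (DM * BM ^ k)).mp h'
    have hP2 : eval 0 (gramPoly k DM BM AM C1) ≠ 0 := by
      rw [gramPoly_eval]
      simpa [Matrix.mul_assoc] using hC1
    have hP2ne : gramPoly k DM BM AM C1 ≠ 0 := by
      intro h0; rw [h0] at hP2; simp at hP2
    have hfin : (insert (0 : ℝ) {x : ℝ | IsRoot (gramPoly k DM BM AM C1) x}).Finite :=
      (Polynomial.finite_setOf_isRoot hP2ne).insert 0
    obtain ⟨s, hs⟩ := hfin.infinite_compl.nonempty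
    have hs0 : s ≠ 0 := fun h0 => hs (by simp [h0])
    have hsroot : eval s (gramPoly k DM BM AM C1) ≠ 0 := fun h0 =>
      hs (Set.mem_insert_of_mem _ h0)
    have hr2 : r + 1 ≤ (DM * (BM + s • AM) ^ k).rank := by
      rw [le_rank_iff]
      refine ⟨C1, ?_⟩
      rw [gramPoly_eval] at hsroot
      simpa [Matrix.mul_assoc] using hsroot
    -- translate to the original family at t0 = s⁻¹
    set t0 : ℝ := s⁻¹ with ht0
    have hkey : AM + t0 • BM = t0 • (BM + s • AM) := by
      rw [smul_add, smul_smul, ht0, inv_mul_cancel₀ hs0, one_smul, add_comm]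
    have hF : DM * (AM + t0 • BM) ^ k = (t0 ^ k • (1 : Matrix (Fin p) (Fin p) ℝ)) *
        (DM * (BM + s • AM) ^ k) := by
      rw [hkey, _root_.smul_pow, Matrix.mul_smul, Matrix.smul_mul, Matrix.one_mul]
    have ht0k : IsUnit ((t0 ^ k • (1 : Matrix (Fin p) (Fin p) ℝ)).det) := by
      rw [Matrix.det_smul, Matrix.det_one, mul_one]
      exact (pow_ne_zero _ (pow_ne_zero _ (inv_ne_zero hs0))).isUnit
    have hrank_t0 : r < (DM * (AM + t0 • BM) ^ k).rank := by
      rw [hF, Matrix.rank_mul_eq_right_of_isUnit_det _ _ ht0k]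
      omega
    obtain ⟨C0, hC0⟩ := (hchar t0).mp hrank_t0
    have hP1ne : gramPoly k DM AM BM C0 ≠ 0 := by
      intro h0; rw [h0] at hC0; simp at hC0
    have hsub : {x : ℝ | IsRoot (gramPoly k DM AM BM C0) x}ᶜ ⊆
        {t : ℝ | r < (DM * (AM + t • BM) ^ k).rank} := by
      intro t ht
      exact (hchar t).mpr ⟨C0, ht⟩
    refine Dense.mono hsub ?_
    exact Set.Countable.dense_compl ℝ (Polynomial.finite_setOf_isRoot hP1ne).countable
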